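/- If (X,T) is an equicontinuous flow on a compact metric space, then the map Θ : E(2^X) → E(X) given by Θ(α)({x}) = α({x}) is an isomorphism of flows; in particular E(X) and E(2^X) are conjugate. -/

import Mathlib

open TopologicalSpace

/-- The induced action of `t ∈ T` on the hyperspace `2^X` of nonempty closed
(= compact) subsets of the compact metric space `X`: `t • A = {t • a : a ∈ A}`. -/
def hyperAct {T X : Type*} [Group T] [MetricSpace X] [MulAction T X]
    (hc : ∀ t : T, Continuous fun x : X => t • x) (t : T)
    (A : NonemptyCompacts X) : NonemptyCompacts X :=
  ⟨⟨(fun x : X => t • x) '' (A : Set X), A.isCompact.image (hc t)⟩,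
    A.nonempty.image _⟩

/-- The enveloping semigroup `E(2^X)` of the induced flow: the closure of the induced
maps in `(2^X)^{2^X}` with the product topology. -/
def envHyper {T X : Type*} [Group T] [MetricSpace X] [MulAction T X]
    (hc : ∀ t : T, Continuous fun x : X => t • x) :
    Set (NonemptyCompacts X → NonemptyCompacts X) :=
  closure (Set.range (hyperAct hc))

/-- The singleton `{x}` as an element of the hyperspace. -/
def singNC {X : Type*} [MetricSpace X] (x : X) : NonemptyCompacts X :=
  ⟨⟨{x}, isCompact_singleton⟩, Set.singleton_nonempty x⟩


open Metric Set Filter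

section Aux

variable {X : Type*} [MetricSpace X]

lemma singNC_coe (x : X) : (singNC x : Set X) = {x} := rfl

lemma dist_singNC (x y : X) : dist (singNC x) (singNC y) = dist x y := by
  rw [NonemptyCompacts.dist_eq]
  apply le_antisymm
  · apply hausdorffDist_le_of_mem_dist dist_nonneg
    · rintro a (rfl : a = x)
      exact ⟨y, rfl, le_refl _⟩
    · rintro b (rfl : b = y)
      exact ⟨x, rfl, by rw [dist_comm]⟩
  · have fin : EMetric.hausdorffEdist ((singNC x : Set X)) (singNC y : Set X) ≠ ⊤ :=
      hausdorffEdist_ne_top_of_nonempty_of_bounded (singleton_nonempty x)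
        (singleton_nonempty y) Bornology.isBounded_singleton Bornology.isBounded_singleton
    have := infDist_le_hausdorffDist_of_mem (x := x) (s := (singNC x : Set X))
      (t := (singNC y : Set X)) rfl fin
    simpa [singNC_coe, infDist_singleton] using this

lemma singNC_isometry : Isometry (singNC (X := X)) := by
  intro a b
  rw [edist_dist, edist_dist, dist_singNC]

lemma singNC_injective : Function.Injective (singNC (X := X)) := singNC_isometry.injective

lemma isClosed_range_singNC [CompactSpace X] : IsClosed (range (singNC (X := X))) :=
  (isCompact_range singNC_isometry.continuous).isClosed

lemma invFun_singNC (x : X) : haveI : Nonempty X := ⟨x⟩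
    Function.invFun singNC (singNC x) = x :=
  haveI : Nonempty X := ⟨x⟩
  Function.leftInverse_invFun singNC_injective x

lemma exists_near {ι β : Type*} [MetricSpace β] {S : Set (ι → β)} {f : ι → β}
    (hf : f ∈ closure S) (s : Finset ι) {ε : ℝ} (hε : 0 < ε) :
    ∃ g ∈ S, ∀ i ∈ s, dist (g i) (f i) < ε := by
  have ho : IsOpen {g : ι → β | ∀ i ∈ s, dist (g i) (f i) < ε} := by
    have : {g : ι → β | ∀ i ∈ s, dist (g i) (f i) < ε}
        = ⋂ i ∈ s, (fun g : ι → β => g i) ⁻¹' (ball (f i) ε) := by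
      ext g; simp [mem_ball]
    rw [this]
    exact isOpen_biInter_finset fun i _ => (isOpen_ball).preimage (continuous_apply i)
  obtain ⟨g, hg1, hg2⟩ := _root_.mem_closure_iff.1 hf _ ho (fun i _ => by simpa using hε)
  exact ⟨g, hg2, hg1⟩

end Aux

section Flow

variable {T X : Type*} [Group T] [MetricSpace X] [CompactSpace X] [MulAction T X]

/-- The candidate map `Θ`. -/
noncomputable def Theta : (NonemptyCompacts X → NonemptyCompacts X) → X → X :=
  fun α x =>
    haveI : Nonempty X := ⟨x⟩
    Function.invFun singNC (α (singNC x))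

variable (hc : ∀ t : T, Continuous fun x : X => t • x)

omit [CompactSpace X] in
lemma hyperAct_singNC (t : T) (x : X) : hyperAct hc t (singNC x) = singNC (t • x) :=
  NonemptyCompacts.ext (by simp [hyperAct, singNC_coe])

lemma mem_range_singNC {α : NonemptyCompacts X → NonemptyCompacts X}
    (hα : α ∈ envHyper hc) (x : X) : α (singNC x) ∈ range (singNC (X := X)) := by
  have hmt : MapsTo (fun g : NonemptyCompacts X → NonemptyCompacts X => g (singNC x))
      (range (hyperAct hc)) (range (singNC (X := X))) := by
    rintro g ⟨t, rfl⟩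
    exact ⟨t • x, (hyperAct_singNC hc t x).symm⟩
  have := map_mem_closure (continuous_apply (singNC x)) hα hmt
  rwa [isClosed_range_singNC.closure_eq] at this

lemma singNC_Theta {α : NonemptyCompacts X → NonemptyCompacts X}
    (hα : α ∈ envHyper hc) (x : X) : singNC (Theta α x) = α (singNC x) := by
  obtain ⟨y, hy⟩ := mem_range_singNC hc hα x
  have : Theta α x = y := by
    rw [Theta, ← hy]
    exact invFun_singNC y
  rw [this, hy]

lemma continuousOn_Theta : ContinuousOn (Theta (X := X)) (envHyper hc) := by
  rw [continuousOn_pi]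
  intro x α₀ hα₀
  rw [ContinuousWithinAt, Metric.tendsto_nhds]
  intro ε hε
  have hev : ∀ᶠ α in nhdsWithin α₀ (envHyper hc),
      dist (α (singNC x)) (α₀ (singNC x)) < ε := by
    apply Filter.Eventually.filter_mono nhdsWithin_le_nhds
    have : Continuous fun α : NonemptyCompacts X → NonemptyCompacts X => α (singNC x) :=
      continuous_apply _
    have := (this.tendsto α₀) (Metric.ball_mem_nhds (α₀ (singNC x)) hε)
    exact this
  filter_upwards [hev, self_mem_nhdsWithin] with α h1 h2
  calc dist (Theta α x) (Theta α₀ x)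
      = dist (singNC (Theta α x)) (singNC (Theta α₀ x)) := (dist_singNC _ _).symm
    _ = dist (α (singNC x)) (α₀ (singNC x)) := by
        rw [singNC_Theta hc h2 x, singNC_Theta hc hα₀ x]
    _ < ε := h1

end Flow

section Flow2

set_option linter.unusedSectionVars false

variable {T X : Type*} [Group T] [MetricSpace X] [CompactSpace X] [MulAction T X]
variable (hc : ∀ t : T, Continuous fun x : X => t • x)

lemma Theta_hyperAct (t : T) (α : NonemptyCompacts X → NonemptyCompacts X) (x : X) :
    Theta (hyperAct hc t ∘ α) x =
      haveI : Nonempty X := ⟨x⟩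
      Function.invFun singNC (hyperAct hc t (α (singNC x))) := rfl

lemma Theta_hyperAct' (t : T) : Theta (hyperAct hc t) = fun x : X => t • x := by
  funext x
  haveI : Nonempty X := ⟨x⟩
  rw [Theta, hyperAct_singNC hc t x, invFun_singNC]

lemma mapsTo_Theta :
    MapsTo (Theta (X := X)) (envHyper hc)
      (closure (Set.range fun t : T => fun x : X => t • x)) := by
  intro α hα
  have h1 : Theta '' envHyper hc ⊆ closure (Theta '' range (hyperAct hc)) := by
    have := (continuousOn_Theta hc).image_closure (s := range (hyperAct hc))
    -- continuousOn_Theta is on envHyper = closure (range ...)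
    exact this
  have h2 : Theta '' range (hyperAct hc) ⊆ Set.range fun t : T => fun x : X => t • x := by
    rintro g ⟨g', ⟨t, rfl⟩, rfl⟩
    exact ⟨t, (Theta_hyperAct' hc t).symm⟩
  exact closure_mono h2 (h1 ⟨α, hα, rfl⟩)

variable (heq : ∀ ε > (0 : ℝ), ∃ δ > (0 : ℝ), ∀ x y : X, dist x y < δ →
      ∀ t : T, dist (t • x) (t • y) < ε)

include heq in
lemma modulus {f : X → X} (hf : f ∈ closure (Set.range fun t : T => fun x : X => t • x)) :
    ∀ ε > (0 : ℝ), ∃ δ > (0 : ℝ), ∀ x y : X, dist x y < δ → dist (f x) (f y) ≤ ε := by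
  intro ε hε
  obtain ⟨δ, hδ, H⟩ := heq ε hε
  refine ⟨δ, hδ, fun x y hxy => ?_⟩
  refine le_of_forall_pos_le_add fun η hη => ?_
  classical
  obtain ⟨g, ⟨t, rfl⟩, hg⟩ := exists_near hf {x, y} (half_pos hη)
  have hx := hg x (by simp)
  have hy := hg y (by simp)
  calc dist (f x) (f y) ≤ dist (f x) (t • x) + dist (t • x) (t • y) + dist (t • y) (f y) :=
        dist_triangle4 _ _ _ _
    _ ≤ η / 2 + ε + η / 2 := by
        simp only at hx hy
        have h1 := H x y hxy t
        rw [dist_comm] at hx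
        linarith
    _ ≤ ε + η := by linarith

include heq in
lemma continuous_of_mem_closure {f : X → X}
    (hf : f ∈ closure (Set.range fun t : T => fun x : X => t • x)) : Continuous f := by
  rw [Metric.continuous_iff]
  intro x ε hε
  obtain ⟨δ, hδ, H⟩ := modulus heq hf (ε / 2) (half_pos hε)
  exact ⟨δ, hδ, fun a ha => lt_of_le_of_lt (H a x ha) (half_lt_self hε)⟩

end Flow2

section Flow3

set_option linter.unusedSectionVars false

variable {T X : Type*} [Group T] [MetricSpace X] [CompactSpace X] [MulAction T X]
variable (hc : ∀ t : T, Continuous fun x : X => t • x)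
variable (heq : ∀ ε > (0 : ℝ), ∃ δ > (0 : ℝ), ∀ x y : X, dist x y < δ →
      ∀ t : T, dist (t • x) (t • y) < ε)

lemma hdist_images_le {g h : X → X} {A : Set X} {r : ℝ} (hr : 0 ≤ r)
    (H : ∀ a ∈ A, dist (g a) (h a) ≤ r) :
    hausdorffDist (g '' A) (h '' A) ≤ r := by
  apply hausdorffDist_le_of_mem_dist hr
  · rintro _ ⟨a, ha, rfl⟩
    exact ⟨h a, mem_image_of_mem _ ha, H a ha⟩
  · rintro _ ⟨a, ha, rfl⟩
    exact ⟨g a, mem_image_of_mem _ ha, by rw [dist_comm]; exact H a ha⟩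

include heq in
lemma exists_cover {f : X → X}
    (hf : f ∈ closure (Set.range fun t : T => fun x : X => t • x))
    {K : Set X} (hK : IsCompact K) {ε : ℝ} (hε : 0 < ε) :
    ∃ s : Finset X, ∀ t : T, (∀ x ∈ s, dist (t • x) (f x) < ε) →
      ∀ a ∈ K, dist (t • a) (f a) ≤ 3 * ε := by
  classical
  obtain ⟨δ₁, hδ₁, H1⟩ := heq ε hε
  obtain ⟨δ₂, hδ₂, H2⟩ := modulus heq hf ε hε
  obtain ⟨s0, hs0K, hs0fin, hcov⟩ := hK.finite_cover_balls (lt_min hδ₁ hδ₂)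
  refine ⟨hs0fin.toFinset, fun t ht a ha => ?_⟩
  obtain ⟨x, hx, hax⟩ : ∃ i, ∃ _ : i ∈ s0, a ∈ ball i (min δ₁ δ₂) := by
    simpa only [mem_iUnion₂] using hcov ha
  rw [mem_ball] at hax
  have hax1 : dist a x < δ₁ := lt_of_lt_of_le hax (min_le_left _ _)
  have hax2 : dist x a < δ₂ := by rw [dist_comm]; exact lt_of_lt_of_le hax (min_le_right _ _)
  calc dist (t • a) (f a)
      ≤ dist (t • a) (t • x) + dist (t • x) (f x) + dist (f x) (f a) := dist_triangle4 _ _ _ _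
    _ ≤ ε + ε + ε := by
        have e1 := H1 a x hax1 t
        have e2 := ht x (hs0fin.mem_toFinset.2 hx)
        have e3 := H2 x a hax2
        linarith
    _ = 3 * ε := by ring

include heq in
lemma eq_image {α : NonemptyCompacts X → NonemptyCompacts X}
    (hα : α ∈ envHyper hc) (A : NonemptyCompacts X) :
    (α A : Set X) = Theta α '' A := by
  classical
  have hf : Theta α ∈ closure (Set.range fun t : T => fun x : X => t • x) :=
    mapsTo_Theta hc hα
  set f : X → X := Theta α with hfdef
  have hfc : Continuous f := continuous_of_mem_closure heq hf
  have hfin : EMetric.hausdorffEdist (α A : Set X) (f '' A) ≠ ⊤ :=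
    hausdorffEdist_ne_top_of_nonempty_of_bounded (α A).nonempty (A.nonempty.image f)
      (α A).isCompact.isBounded ((A.isCompact.image hfc).isBounded)
  have hd0 : hausdorffDist (α A : Set X) (f '' A) ≤ 0 := by
    refine le_of_forall_pos_le_add fun ε hε => ?_
    have hε8 : 0 < ε / 8 := by linarith
    obtain ⟨s, hs⟩ := exists_cover heq hf A.isCompact hε8
    obtain ⟨g, ⟨t, rfl⟩, hg⟩ := exists_near hα (insert A (s.image singNC)) hε8
    have h1 : dist (hyperAct hc t A) (α A) < ε / 8 := hg A (Finset.mem_insert_self _ _)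
    have h2 : ∀ x ∈ s, dist (t • x) (f x) < ε / 8 := by
      intro x hx
      have := hg (singNC x) (Finset.mem_insert_of_mem (Finset.mem_image_of_mem _ hx))
      rw [hyperAct_singNC hc t x, ← singNC_Theta hc hα x, dist_singNC] at this
      exact this
    have h3 := hs t h2
    have h4 : hausdorffDist ((fun x : X => t • x) '' A) (f '' A) ≤ 3 * (ε / 8) :=
      hdist_images_le (by linarith) h3
    have hfin2 : EMetric.hausdorffEdist (α A : Set X) ((fun x : X => t • x) '' A) ≠ ⊤ :=
      hausdorffEdist_ne_top_of_nonempty_of_bounded (α A).nonempty (A.nonempty.image _)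
        (α A).isCompact.isBounded ((A.isCompact.image (hc t)).isBounded)
    have h5 : hausdorffDist (α A : Set X) ((fun x : X => t • x) '' A) < ε / 8 := by
      have : dist (α A) (hyperAct hc t A) < ε / 8 := by rw [dist_comm]; exact h1
      rw [NonemptyCompacts.dist_eq] at this
      exact this
    calc hausdorffDist (α A : Set X) (f '' A)
        ≤ hausdorffDist (α A : Set X) ((fun x : X => t • x) '' A)
            + hausdorffDist ((fun x : X => t • x) '' A) (f '' A) :=
          hausdorffDist_triangle hfin2
      _ ≤ 0 + ε := by linarith
  have hd : hausdorffDist (α A : Set X) (f '' A) = 0 :=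
    le_antisymm hd0 hausdorffDist_nonneg
  exact (IsClosed.hausdorffDist_zero_iff_eq (α A).isCompact.isClosed
    (A.isCompact.image hfc).isClosed hfin).1 hd

end Flow3

section Flow4

set_option linter.unusedSectionVars false

variable {T X : Type*} [Group T] [MetricSpace X] [CompactSpace X] [MulAction T X]
variable (hc : ∀ t : T, Continuous fun x : X => t • x)
variable (heq : ∀ ε > (0 : ℝ), ∃ δ > (0 : ℝ), ∀ x y : X, dist x y < δ →
      ∀ t : T, dist (t • x) (t • y) < ε)

/-- The hyperspace map induced by a continuous map. -/
def imgMap {f : X → X} (hfc : Continuous f) :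
    NonemptyCompacts X → NonemptyCompacts X :=
  fun A => ⟨⟨f '' A, A.isCompact.image hfc⟩, A.nonempty.image f⟩

lemma Theta_imgMap {f : X → X} (hfc : Continuous f) : Theta (imgMap hfc) = f := by
  funext x
  haveI : Nonempty X := ⟨x⟩
  have h : imgMap hfc (singNC x) = singNC (f x) :=
    NonemptyCompacts.ext (by simp [imgMap, singNC_coe])
  rw [Theta, h, invFun_singNC]

include heq in
lemma imgMap_mem {f : X → X}
    (hf : f ∈ closure (Set.range fun t : T => fun x : X => t • x))
    (hfc : Continuous f) : imgMap hfc ∈ envHyper hc := by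
  classical
  rw [envHyper, _root_.mem_closure_iff]
  intro o ho hmem
  obtain ⟨I, u, h1, h2⟩ := isOpen_pi_iff.1 ho _ hmem
  by_cases hI : I.Nonempty
  · have hball : ∀ A : NonemptyCompacts X,
        ∃ e : ℝ, 0 < e ∧ (A ∈ I → ball (imgMap hfc A) e ⊆ u A) := by
      intro A
      by_cases h : A ∈ I
      · obtain ⟨e, he, hb⟩ := Metric.isOpen_iff.1 (h1 A h).1 _ (h1 A h).2
        exact ⟨e, he, fun _ => hb⟩
      · exact ⟨1, one_pos, fun h' => absurd h' h⟩
    choose e he hb using hball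
    set ε := I.inf' hI e with hεdef
    have hε : 0 < ε := (Finset.lt_inf'_iff hI).2 fun A _ => he A
    have hε4 : 0 < ε / 4 := by linarith
    have hK : IsCompact (⋃ A ∈ I, (A : Set X)) :=
      I.finite_toSet.isCompact_biUnion fun A _ => A.isCompact
    obtain ⟨s, hs⟩ := exists_cover heq hf hK hε4
    obtain ⟨g, ⟨t, rfl⟩, hg⟩ := exists_near hf s hε4
    refine ⟨hyperAct hc t, h2 ?_, ⟨t, rfl⟩⟩
    intro A hA
    rw [Finset.mem_coe] at hA
    apply hb A hA
    rw [mem_ball, NonemptyCompacts.dist_eq]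
    have h3 : ∀ a ∈ (A : Set X), dist (t • a) (f a) ≤ 3 * (ε / 4) :=
      fun a ha => hs t hg a (mem_biUnion hA ha)
    have h4 : hausdorffDist ((fun x : X => t • x) '' A) (f '' A) ≤ 3 * (ε / 4) :=
      hdist_images_le (by linarith) h3
    have h5 : 3 * (ε / 4) < e A := lt_of_lt_of_le (by linarith) (Finset.inf'_le e hA)
    exact lt_of_le_of_lt h4 h5
  · rw [Finset.not_nonempty_iff_eq_empty] at hI
    refine ⟨hyperAct hc 1, h2 ?_, ⟨1, rfl⟩⟩
    simp [hI]

end Flow4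

/-- If `(X,T)` is an equicontinuous flow on a compact metric space, then the map
`Θ : E(2^X) → E(X)` given by `{Θ(α)(x)} = α({x})` is an isomorphism of flows:
a continuous equivariant bijection of `E(2^X)` onto `E(X)`; in particular `E(X)` and
`E(2^X)` are conjugate. -/
theorem theta_isomorphism_of_equicontinuous
    {T X : Type*} [Group T] [MetricSpace X] [CompactSpace X] [MulAction T X]
    (hc : ∀ t : T, Continuous fun x : X => t • x)
    (heq : ∀ ε > (0 : ℝ), ∃ δ > (0 : ℝ), ∀ x y : X, dist x y < δ →
      ∀ t : T, dist (t • x) (t • y) < ε) :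
    ∃ Θ : (NonemptyCompacts X → NonemptyCompacts X) → (X → X),
      Set.BijOn Θ (envHyper hc)
        (closure (Set.range fun t : T => fun x : X => t • x)) ∧
      ContinuousOn Θ (envHyper hc) ∧
      (∀ α ∈ envHyper hc, ∀ x : X, (α (singNC x) : Set X) = {Θ α x}) ∧
      (∀ t : T, ∀ α ∈ envHyper hc,
        Θ (hyperAct hc t ∘ α) = (fun x : X => t • x) ∘ Θ α) := by
  refine ⟨Theta, ⟨mapsTo_Theta hc, ?_, ?_⟩, continuousOn_Theta hc, ?_, ?_⟩
  · -- injectivity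
    intro α hα β hβ hTh
    funext A
    apply NonemptyCompacts.ext
    rw [eq_image hc heq hα A, eq_image hc heq hβ A, hTh]
  · -- surjectivity
    intro f hf
    have hfc : Continuous f := continuous_of_mem_closure heq hf
    exact ⟨imgMap hfc, imgMap_mem hc heq hf hfc, Theta_imgMap hfc⟩
  · -- singletons
    intro α hα x
    rw [← singNC_Theta hc hα x]
    rfl
  · -- equivariance
    intro t α hα
    funext x
    haveI : Nonempty X := ⟨x⟩
    show Function.invFun singNC (hyperAct hc t (α (singNC x))) = t • Theta α x
    rw [← singNC_Theta hc hα x, hyperAct_singNC, invFun_singNC]
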